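/- Let T be a tree containing a vertex v with neighbors u and w, where deleting v splits T into a component P containing u, a component Q containing w, and components forming a set M of vertices attached to v via neighbors v_1,...,v_t (t ≥ 1). Let T_u be the tree obtained from T by detaching the edges from v to v_1,...,v_t and reattaching v_1,...,v_t to u, and define T_w analogously with w. Then W(T) < max{W(T_u), W(T_w)}, where W denotes the Wiener index (the sum of distances over all unordered pairs of vertices). -/

import Mathlib

open SimpleGraph Finset

/-- The Wiener index: sum of distances over unordered pairs (as a rational). -/
noncomputable def wiener {V : Type*} [Fintype V] (G : SimpleGraph V) : ℚ :=
  (∑ u : V, ∑ v : V, (G.dist u v : ℚ)) / 2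

/-- The average distance `μ(G) = W(G) / C(n,2)`. -/
noncomputable def avgDist {V : Type*} [Fintype V] (G : SimpleGraph V) : ℚ :=
  wiener G / ((Fintype.card V).choose 2 : ℚ)

/-- `a` is the independence number of `G`. -/
def IsIndepNum {V : Type*} (G : SimpleGraph V) (a : ℕ) : Prop :=
  IsGreatest {m | ∃ s : Finset V, s.card = m ∧ ∀ x ∈ s, ∀ y ∈ s, ¬ G.Adj x y} a

/-- The tree `H_{a,b}`: a path on `a` vertices with `⌊b/2⌋` pendent vertices attached to
one end and `⌈b/2⌉` pendent vertices attached to the other end. -/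
def Hab (a b : ℕ) : SimpleGraph (Fin (a + b)) :=
  SimpleGraph.fromRel (fun i j =>
    ((i : ℕ) + 1 = (j : ℕ) ∧ (j : ℕ) < a) ∨
    (a ≤ (i : ℕ) ∧ (i : ℕ) < a + b / 2 ∧ (j : ℕ) = 0) ∨
    (a + b / 2 ≤ (i : ℕ) ∧ (j : ℕ) = a - 1))



section Aux

variable {V : Type*}

private lemma walk_split {G : SimpleGraph V} {x y z : V} (p : G.Walk x y) (h : z ∈ p.support) :
    G.dist x z + G.dist z y ≤ p.length := by
  classical
  calc G.dist x z + G.dist z y ≤ (p.takeUntil z h).length + (p.dropUntil z h).length :=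
        Nat.add_le_add (SimpleGraph.dist_le _) (SimpleGraph.dist_le _)
    _ = p.length := by rw [← SimpleGraph.Walk.length_append, p.take_spec h]

private lemma lip_le_walk {G : SimpleGraph V} (f : V → ℤ)
    (hlip : ∀ a b, G.Adj a b → f b ≤ f a + 1) :
    ∀ {x z : V} (p : G.Walk z x), f z ≤ f x + p.length := by
  intro x z p
  induction p with
  | nil => simp
  | cons h q ih =>
      rw [SimpleGraph.Walk.length_cons]
      have h1 := hlip _ _ h.symm
      push_cast
      push_cast at ih
      omega

private lemma lb_of_lip {G : SimpleGraph V} {x y : V} (hr : G.Reachable x y) (f : V → ℤ)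
    (hx : f x = 0) (hlip : ∀ a b, G.Adj a b → f b ≤ f a + 1) : f y ≤ (G.dist x y : ℤ) := by
  obtain ⟨p, hp⟩ := hr.symm.exists_walk_length_eq_dist
  have := lip_le_walk f hlip p
  rw [hx, hp, SimpleGraph.dist_comm] at this
  simpa using this

private lemma dv_adj {T : SimpleGraph V} {v a b : V}
    (h : (T.deleteEdges {e | v ∈ e}).Adj a b) : T.Adj a b ∧ a ≠ v ∧ b ≠ v := by
  rw [SimpleGraph.deleteEdges_adj] at h
  refine ⟨h.1, ?_, ?_⟩ <;> rintro rfl <;> exact h.2 (by simp)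

private lemma dv_reach_v {T : SimpleGraph V} {v z : V}
    (h : (T.deleteEdges {e | v ∈ e}).Reachable v z) : v = z := by
  obtain ⟨p⟩ := h
  cases p with
  | nil => rfl
  | cons h _ => exact absurd rfl (dv_adj h).2.1

private lemma reach_or_support {T : SimpleGraph V} (v : V) {y z : V} (p : T.Walk y z) :
    (T.deleteEdges {e | v ∈ e}).Reachable y z ∨ v ∈ p.support := by
  induction p with
  | nil => exact Or.inl (Reachable.refl _)
  | @cons a b c h q ih =>
      by_cases hav : a = v
      · exact Or.inr (by simp [hav])
      by_cases hbv : b = v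
      · refine Or.inr ?_
        rw [SimpleGraph.Walk.support_cons]
        exact List.mem_cons_of_mem _ (hbv ▸ q.start_mem_support)
      · have hadj : (T.deleteEdges {e | v ∈ e}).Adj a b := by
          rw [SimpleGraph.deleteEdges_adj]
          refine ⟨h, fun hm => ?_⟩
          rcases Sym2.mem_iff.mp hm with h' | h'
          · exact hav h'.symm
          · exact hbv h'.symm
        rcases ih with hr | hs
        · exact Or.inl (hadj.reachable.trans hr)
        · refine Or.inr ?_
          rw [SimpleGraph.Walk.support_cons]
          exact List.mem_cons_of_mem _ hs

private lemma dist_split_v {T : SimpleGraph V} (hc : T.Connected) {v x y : V}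
    (h : ¬ (T.deleteEdges {e | v ∈ e}).Reachable x y) :
    T.dist x y = T.dist x v + T.dist v y := by
  obtain ⟨p, hp⟩ := (hc.preconnected x y).exists_walk_length_eq_dist
  rcases reach_or_support v p with hr | hs
  · exact absurd hr h
  · exact le_antisymm (hc.dist_triangle) (hp ▸ walk_split p hs)

private lemma not_reach_nbrs {T : SimpleGraph V} (hT : T.IsTree) {v a b : V} (hab : a ≠ b)
    (ha : T.Adj v a) (hb : T.Adj v b) : ¬ (T.deleteEdges {e | v ∈ e}).Reachable a b := by
  intro hr
  have hbridge := (isAcyclic_iff_forall_adj_isBridge.mp hT.IsAcyclic) ha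
  rw [isBridge_iff] at hbridge
  apply hbridge
  have h1 : (T \ fromEdgeSet {s(v, a)}).Adj v b := by
    rw [sdiff_adj]
    refine ⟨hb, fun hadj => ?_⟩
    rw [fromEdgeSet_adj] at hadj
    rcases Sym2.eq_iff.mp hadj.1 with ⟨_, h'⟩ | ⟨h', _⟩
    · exact hab h'.symm
    · exact ha.ne' h'.symm
  have hmono : T.deleteEdges {e | v ∈ e} ≤ T \ fromEdgeSet {s(v, a)} := by
    have he : T \ fromEdgeSet {s(v, a)} = T.deleteEdges {s(v, a)} := rfl
    rw [he]
    exact SimpleGraph.deleteEdges_anti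
      (by rintro e he'; rw [Set.mem_singleton_iff] at he'; subst he'; simp)
  exact h1.reachable.trans (hr.symm.mono hmono)

private lemma classify {T : SimpleGraph V} (hT : T.IsTree) {v u w : V} {t : ℕ} (vs : Fin t → V)
    (hnb : ∀ x, T.Adj v x → x = u ∨ x = w ∨ ∃ i, vs i = x) (y : V) :
    y = v ∨ (T.deleteEdges {e | v ∈ e}).Reachable u y ∨
      (T.deleteEdges {e | v ∈ e}).Reachable w y ∨
      ∃ i, (T.deleteEdges {e | v ∈ e}).Reachable (vs i) y := by
  suffices H : ∀ (a b : V) (p : T.Walk a b), b = v → (a = v ∨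
      (T.deleteEdges {e | v ∈ e}).Reachable u a ∨
      (T.deleteEdges {e | v ∈ e}).Reachable w a ∨
      ∃ i, (T.deleteEdges {e | v ∈ e}).Reachable (vs i) a) by
    obtain ⟨p⟩ := hT.isConnected.preconnected y v
    exact H y v p rfl
  intro a b p
  induction p with
  | nil => intro h; exact Or.inl h
  | @cons a b c h q ih =>
      intro hcv
      specialize ih hcv
      by_cases hav : a = v
      · exact Or.inl hav
      by_cases hbv : b = v
      · subst hbv
        rcases hnb a h.symm with rfl | rfl | ⟨i, hi⟩
        · exact Or.inr (Or.inl (Reachable.refl _))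
        · exact Or.inr (Or.inr (Or.inl (Reachable.refl _)))
        · exact Or.inr (Or.inr (Or.inr ⟨i, hi ▸ Reachable.refl _⟩))
      · have hadj : (T.deleteEdges {e | v ∈ e}).Adj a b := by
          rw [SimpleGraph.deleteEdges_adj]
          refine ⟨h, fun hm => ?_⟩
          rcases Sym2.mem_iff.mp hm with h' | h'
          · exact hav h'.symm
          · exact hbv h'.symm
        rcases ih with h' | h' | h' | ⟨i, h'⟩
        · exact absurd h' hbv
        · exact Or.inr (Or.inl (h'.trans hadj.symm.reachable))
        · exact Or.inr (Or.inr (Or.inl (h'.trans hadj.symm.reachable)))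
        · exact Or.inr (Or.inr (Or.inr ⟨i, h'.trans hadj.symm.reachable⟩))

private lemma parent_dist {T : SimpleGraph V} (hT : T.IsTree) {v a x : V} (hx : x ≠ v)
    (ha : T.Adj v a) (hr : (T.deleteEdges {e | v ∈ e}).Reachable a x) :
    T.dist a x + 1 = T.dist v x := by
  have hc := hT.isConnected
  have hd1 : T.dist v x ≠ 0 :=
    SimpleGraph.dist_ne_zero_iff_ne_and_reachable.mpr ⟨fun h => hx h.symm, hc.preconnected v x⟩
  obtain ⟨p, hp⟩ := (hc.preconnected v x).exists_walk_length_eq_dist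
  cases p with
  | nil => exact absurd hp.symm (by simpa using hd1)
  | @cons _ z _ h q =>
      rw [SimpleGraph.Walk.length_cons] at hp
      have hq : T.dist z x ≤ q.length := SimpleGraph.dist_le q
      have hzr : (T.deleteEdges {e | v ∈ e}).Reachable z x := by
        by_contra hnr
        have := dist_split_v hc hnr
        omega
      have haz : a = z := by
        by_contra hne
        exact not_reach_nbrs hT hne ha h (hr.trans hzr.symm)
      subst haz
      have htri : T.dist v x ≤ T.dist v a + T.dist a x := hc.dist_triangle
      have hva : T.dist v a = 1 := SimpleGraph.dist_eq_one_iff_adj.mpr ha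
      omega

end Aux


section A
variable {V : Type*}

private lemma two_dist_le {T : SimpleGraph V} (hT : T.IsTree) {v u w : V} {t : ℕ}
    (vs : Fin t → V) (hu : T.Adj v u) (hw : T.Adj v w) (huw : u ≠ w)
    (hvs : ∀ i, T.Adj v (vs i)) (hvsu : ∀ i, vs i ≠ u) (hvsw : ∀ i, vs i ≠ w)
    (hnb : ∀ x, T.Adj v x → x = u ∨ x = w ∨ ∃ i, vs i = x) (y : V) :
    2 * T.dist v y ≤ T.dist u y + T.dist w y := by
  have hc := hT.isConnected
  have hone : ∀ {a : V}, T.Adj v a → T.dist a v = 1 := fun h => by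
    rw [SimpleGraph.dist_comm]; exact SimpleGraph.dist_eq_one_iff_adj.mpr h
  rcases classify hT vs hnb y with rfl | hru | hrw | ⟨i, hri⟩
  · simp [SimpleGraph.dist_self]
  · have hyv : y ≠ v := by
      rintro rfl
      exact hu.ne (dv_reach_v hru.symm)
    have h1 := parent_dist hT hyv hu hru
    have h2 : ¬ (T.deleteEdges {e | v ∈ e}).Reachable w y := fun h =>
      not_reach_nbrs hT (Ne.symm huw) hw hu (h.trans hru.symm)
    have h3 := dist_split_v hc h2
    have h4 := hone hw
    omega
  · have hyv : y ≠ v := by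
      rintro rfl
      exact hw.ne (dv_reach_v hrw.symm)
    have h1 := parent_dist hT hyv hw hrw
    have h2 : ¬ (T.deleteEdges {e | v ∈ e}).Reachable u y := fun h =>
      not_reach_nbrs hT huw hu hw (h.trans hrw.symm)
    have h3 := dist_split_v hc h2
    have h4 := hone hu
    omega
  · have h2 : ¬ (T.deleteEdges {e | v ∈ e}).Reachable u y := fun h =>
      not_reach_nbrs hT (fun he => hvsu i he.symm) hu (hvs i) (h.trans hri.symm)
    have h3 : ¬ (T.deleteEdges {e | v ∈ e}).Reachable w y := fun h =>
      not_reach_nbrs hT (fun he => hvsw i he.symm) hw (hvs i) (h.trans hri.symm)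
    have h4 := dist_split_v hc h2
    have h5 := dist_split_v hc h3
    have h6 := hone hu
    have h7 := hone hw
    omega
end A


section M
variable {V : Type*}

private def InM (T : SimpleGraph V) (v : V) {t : ℕ} (vs : Fin t → V) (y : V) : Prop :=
  ∃ i, (T.deleteEdges {e | v ∈ e}).Reachable (vs i) y

private lemma main_lb {T : SimpleGraph V} (hT : T.IsTree) {v : V} {t : ℕ} {vs : Fin t → V}
    (hvs : ∀ i, T.Adj v (vs i)) {u w u' : V}
    (hu : T.Adj v u) (hw : T.Adj v w)
    (hvsu : ∀ i, vs i ≠ u) (hvsw : ∀ i, vs i ≠ w)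
    (hnb : ∀ x, T.Adj v x → x = u ∨ x = w ∨ ∃ i, vs i = x)
    (hu' : T.Adj v u') (hvsu' : ∀ i, vs i ≠ u')
    (G : SimpleGraph V)
    (hG : G = (T.deleteEdges {e | ∃ i, e = s(v, vs i)}) ⊔
      SimpleGraph.fromEdgeSet {e | ∃ i, e = s(u', vs i)}) :
    (∀ x y, ¬ InM T v vs x → ¬ InM T v vs y → (T.dist x y : ℤ) ≤ G.dist x y) ∧
    (∀ x y, InM T v vs x → ¬ InM T v vs y →
      (T.dist x v + T.dist u' y : ℤ) ≤ G.dist x y) ∧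
    (∀ x y, InM T v vs x → InM T v vs y → (T.deleteEdges {e | v ∈ e}).Reachable x y →
      (T.dist x y : ℤ) ≤ G.dist x y) ∧
    (∀ x y, InM T v vs x → InM T v vs y → ¬ (T.deleteEdges {e | v ∈ e}).Reachable x y →
      (T.dist x v + T.dist v y : ℤ) ≤ G.dist x y) := by
  classical
  subst hG
  set G := (T.deleteEdges {e | ∃ i, e = s(v, vs i)}) ⊔
      SimpleGraph.fromEdgeSet {e | ∃ i, e = s(u', vs i)} with hGdef
  have hc := hT.isConnected
  have hvne : ∀ i, vs i ≠ v := fun i => (hvs i).ne'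
  have hMvs : ∀ i, InM T v vs (vs i) := fun i => ⟨i, Reachable.refl _⟩
  have hMnbr : ∀ {a : V}, T.Adj v a → (∀ i, vs i ≠ a) → ¬ InM T v vs a := by
    rintro a ha hne ⟨i, hr⟩
    exact not_reach_nbrs hT (hne i) (hvs i) ha hr
  have hMu : ¬ InM T v vs u := hMnbr hu hvsu
  have hMw : ¬ InM T v vs w := hMnbr hw hvsw
  have hMu' : ¬ InM T v vs u' := hMnbr hu' hvsu'
  have hMv : ¬ InM T v vs v := by
    rintro ⟨i, hr⟩
    exact hvne i (dv_reach_v hr.symm).symm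
  have cross : ∀ {x y : V}, InM T v vs x → ¬ InM T v vs y →
      T.dist x y = T.dist x v + T.dist v y := by
    rintro x y ⟨i, hrx⟩ hy
    exact dist_split_v hc (fun hxy => hy ⟨i, hrx.trans hxy⟩)
  have hone : ∀ {a : V}, T.Adj v a → T.dist v a = 1 :=
    fun h => SimpleGraph.dist_eq_one_iff_adj.mpr h
  have hnS : ∀ {a : V}, T.Adj v a → (∀ i, vs i ≠ a) →
      s(v, a) ∉ {e | ∃ i, e = s(v, vs i)} := by
    rintro a ha hne ⟨i, hi⟩
    rcases Sym2.eq_iff.mp hi with ⟨_, h'⟩ | ⟨h', _⟩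
    · exact hne i h'.symm
    · exact hvne i h'.symm
  have hGD : ∀ {a b : V}, T.Adj a b → s(a, b) ∉ {e | ∃ i, e = s(v, vs i)} → G.Adj a b :=
    fun h hn => (SimpleGraph.sup_adj _ _ _ _).mpr (Or.inl (SimpleGraph.deleteEdges_adj.mpr ⟨h, hn⟩))
  have hGnew : ∀ i, G.Adj u' (vs i) := fun i =>
    (SimpleGraph.sup_adj _ _ _ _).mpr (Or.inr ((SimpleGraph.fromEdgeSet_adj _).mpr ⟨⟨i, rfl⟩, fun h => hvsu' i h.symm⟩))
  have hGvu' : G.Adj v u' := hGD hu' (hnS hu' hvsu')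
  have hDvleG : T.deleteEdges {e | v ∈ e} ≤ G := by
    refine le_trans (SimpleGraph.deleteEdges_anti ?_) le_sup_left
    rintro e ⟨i, rfl⟩
    exact Sym2.mem_mk_left _ _
  have hreach : ∀ z, G.Reachable v z := by
    intro z
    rcases classify hT vs hnb z with rfl | hr | hr | ⟨i, hr⟩
    · exact Reachable.refl _
    · exact (hGD hu (hnS hu hvsu)).reachable.trans (hr.mono hDvleG)
    · exact (hGD hw (hnS hw hvsw)).reachable.trans (hr.mono hDvleG)
    · exact (hGvu'.reachable.trans (hGnew i).reachable).trans (hr.mono hDvleG)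
  have hreach2 : ∀ a b, G.Reachable a b := fun a b => (hreach a).symm.trans (hreach b)
  have Tlip : ∀ (x' : V) {a b : V}, T.Adj a b → T.dist x' b ≤ T.dist x' a + 1 := by
    intro x' a b h
    have h1 : T.dist x' b ≤ T.dist x' a + T.dist a b := hc.dist_triangle
    rwa [SimpleGraph.dist_eq_one_iff_adj.mpr h] at h1
  have E1 : ∀ {a b : V}, (T.deleteEdges {e | ∃ i, e = s(v, vs i)}).Adj a b →
      (¬ InM T v vs a ∧ ¬ InM T v vs b) ∨
      ((T.deleteEdges {e | v ∈ e}).Reachable a b ∧ InM T v vs a ∧ InM T v vs b) := by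
    intro a b hD
    rw [SimpleGraph.deleteEdges_adj] at hD
    by_cases hv : v ∈ s(a, b)
    · left
      rcases Sym2.mem_iff.mp hv with h' | h'
      · subst h'
        refine ⟨hMv, ?_⟩
        rcases hnb b hD.1 with rfl | rfl | ⟨i, hi⟩
        · exact hMu
        · exact hMw
        · exact absurd ⟨i, by rw [hi]⟩ hD.2
      · subst h'
        refine ⟨?_, hMv⟩
        rcases hnb a hD.1.symm with rfl | rfl | ⟨i, hi⟩
        · exact hMu
        · exact hMw
        · exact absurd ⟨i, by rw [← hi, Sym2.eq_swap]⟩ hD.2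
    · have hDv : (T.deleteEdges {e | v ∈ e}).Adj a b :=
        SimpleGraph.deleteEdges_adj.mpr ⟨hD.1, hv⟩
      by_cases hIa : InM T v vs a
      · right
        obtain ⟨i, hr⟩ := hIa
        exact ⟨hDv.reachable, ⟨i, hr⟩, ⟨i, hr.trans hDv.reachable⟩⟩
      · left
        refine ⟨hIa, fun hIb => hIa ?_⟩
        obtain ⟨i, hr⟩ := hIb
        exact ⟨i, hr.trans hDv.symm.reachable⟩
  have Enew : ∀ {a b : V}, (SimpleGraph.fromEdgeSet {e | ∃ i, e = s(u', vs i)}).Adj a b →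
      (∃ i, a = u' ∧ b = vs i) ∨ (∃ i, a = vs i ∧ b = u') := by
    intro a b hN
    rw [SimpleGraph.fromEdgeSet_adj] at hN
    obtain ⟨⟨i, hi⟩, hne⟩ := hN
    rcases Sym2.eq_iff.mp hi with ⟨h1, h2⟩ | ⟨h1, h2⟩
    · exact Or.inl ⟨i, h1, h2⟩
    · exact Or.inr ⟨i, h1, h2⟩
  have hvs1 : ∀ i, T.dist (vs i) v = 1 := fun i => by
    rw [SimpleGraph.dist_comm]; exact hone (hvs i)
  have du'vs : ∀ i, T.dist u' (vs i) = 2 := by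
    intro i
    have h1 : T.dist (vs i) u' = T.dist (vs i) v + T.dist v u' := cross (hMvs i) hMu'
    rw [SimpleGraph.dist_comm (u := u') (v := vs i), h1, hvs1 i, hone hu']
  -- key1 : lower bound for x outside M
  have key1 : ∀ x, ¬ InM T v vs x → ∀ y,
      ((T.dist x y : ℤ) + if InM T v vs y then (T.dist u' x : ℤ) - T.dist v x else 0)
        ≤ (G.dist x y : ℤ) := by
    intro x hx
    have hfx : ((T.dist x x : ℤ) + if InM T v vs x then (T.dist u' x : ℤ) - T.dist v x else 0)
        = 0 := by
      simp [if_neg hx, SimpleGraph.dist_self]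
    have hlip : ∀ a b, G.Adj a b →
        ((T.dist x b : ℤ) + if InM T v vs b then (T.dist u' x : ℤ) - T.dist v x else 0)
          ≤ ((T.dist x a : ℤ) + if InM T v vs a then (T.dist u' x : ℤ) - T.dist v x else 0) + 1 := by
      intro a b hab
      rcases (SimpleGraph.sup_adj _ _ _ _).mp hab with hD | hN
      · have hTab : T.Adj a b := (SimpleGraph.deleteEdges_adj.mp hD).1
        have hl := Tlip x hTab
        rcases E1 hD with ⟨ha, hb⟩ | ⟨_, ha, hb⟩
        · rw [if_neg ha, if_neg hb]; push_cast; omega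
        · rw [if_pos ha, if_pos hb]; push_cast; omega
      · obtain ⟨i, ha', hb'⟩ | ⟨i, ha', hb'⟩ := Enew hN <;> rw [ha', hb']
        · have hxvs : T.dist x (vs i) = T.dist v x + 1 := by
            have h1 := cross (hMvs i) hx
            rw [SimpleGraph.dist_comm (u := x) (v := (vs i)), h1, hvs1 i]
            omega
          have hcomm : T.dist x u' = T.dist u' x := SimpleGraph.dist_comm (u := x) (v := u')
          rw [if_pos (hMvs i), if_neg hMu']
          push_cast
          omega
        · have hxvs : T.dist x (vs i) = T.dist v x + 1 := by
            have h1 := cross (hMvs i) hx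
            rw [SimpleGraph.dist_comm (u := x) (v := (vs i)), h1, hvs1 i]
            omega
          have hcomm : T.dist x u' = T.dist u' x := SimpleGraph.dist_comm (u := x) (v := u')
          rw [if_neg hMu', if_pos (hMvs i)]
          push_cast
          omega
    intro y
    exact lb_of_lip (hreach2 x y)
      (fun z => (T.dist x z : ℤ) + if InM T v vs z then (T.dist u' x : ℤ) - T.dist v x else 0)
      hfx hlip
  -- key2 : lower bound for x in M
  have key2 : ∀ x, InM T v vs x → ∀ y,
      (if (T.deleteEdges {e | v ∈ e}).Reachable x y then (T.dist x y : ℤ)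
        else (T.dist x v : ℤ) + T.dist u' y - if InM T v vs y then 1 else 0)
        ≤ (G.dist x y : ℤ) := by
    intro x hx
    have hnrx : ∀ {z : V}, ¬ InM T v vs z → ¬ (T.deleteEdges {e | v ∈ e}).Reachable x z := by
      intro z hz hr
      obtain ⟨i, hri⟩ := hx
      exact hz ⟨i, hri.trans hr⟩
    have hfx : (if (T.deleteEdges {e | v ∈ e}).Reachable x x then (T.dist x x : ℤ)
        else (T.dist x v : ℤ) + T.dist u' x - if InM T v vs x then 1 else 0) = 0 := by
      rw [if_pos (Reachable.refl x)]
      simp [SimpleGraph.dist_self]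
    have hlip : ∀ a b, G.Adj a b →
        (if (T.deleteEdges {e | v ∈ e}).Reachable x b then (T.dist x b : ℤ)
          else (T.dist x v : ℤ) + T.dist u' b - if InM T v vs b then 1 else 0)
        ≤ (if (T.deleteEdges {e | v ∈ e}).Reachable x a then (T.dist x a : ℤ)
          else (T.dist x v : ℤ) + T.dist u' a - if InM T v vs a then 1 else 0) + 1 := by
      intro a b hab
      rcases (SimpleGraph.sup_adj _ _ _ _).mp hab with hD | hN
      · have hTab : T.Adj a b := (SimpleGraph.deleteEdges_adj.mp hD).1
        rcases E1 hD with ⟨ha, hb⟩ | ⟨hr, ha, hb⟩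
        · have h1 := hnrx ha
          have h2 := hnrx hb
          have hl := Tlip u' hTab
          rw [if_neg h1, if_neg h2, if_neg ha, if_neg hb]
          push_cast
          omega
        · by_cases hra : (T.deleteEdges {e | v ∈ e}).Reachable x a
          · have hrb : (T.deleteEdges {e | v ∈ e}).Reachable x b := hra.trans hr
            have hl := Tlip x hTab
            rw [if_pos hra, if_pos hrb]
            push_cast
            omega
          · have hrb : ¬ (T.deleteEdges {e | v ∈ e}).Reachable x b :=
              fun h => hra (h.trans hr.symm)
            have hl := Tlip u' hTab
            rw [if_neg hra, if_neg hrb, if_pos ha, if_pos hb]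
            push_cast
            omega
      · obtain ⟨i, ha', hb'⟩ | ⟨i, ha', hb'⟩ := Enew hN <;> rw [ha', hb']
        · -- a = u', b = vs i
          have h1 := hnrx hMu'
          rw [if_neg h1, if_neg hMu', SimpleGraph.dist_self]
          by_cases hrb : (T.deleteEdges {e | v ∈ e}).Reachable x (vs i)
          · have hl : T.dist x (vs i) ≤ T.dist x v + 1 := Tlip x (hvs i)
            rw [if_pos hrb]
            push_cast
            omega
          · have h2 := du'vs i
            rw [if_neg hrb, if_pos (hMvs i)]
            push_cast
            omega
        · -- a = vs i, b = u'
          have h1 := hnrx hMu'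
          rw [if_neg h1, if_neg hMu', SimpleGraph.dist_self]
          by_cases hra : (T.deleteEdges {e | v ∈ e}).Reachable x (vs i)
          · have hl : T.dist x v ≤ T.dist x (vs i) + 1 := Tlip x (hvs i).symm
            rw [if_pos hra]
            push_cast
            omega
          · have h2 := du'vs i
            rw [if_neg hra, if_pos (hMvs i)]
            push_cast
            omega
    intro y
    exact lb_of_lip (hreach2 x y)
      (fun z => if (T.deleteEdges {e | v ∈ e}).Reachable x z then (T.dist x z : ℤ)
        else (T.dist x v : ℤ) + T.dist u' z - if InM T v vs z then 1 else 0)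
      hfx hlip
  refine ⟨?_, ?_, ?_, ?_⟩
  · intro x y hx hy
    have := key1 x hx y
    rwa [if_neg hy, add_zero] at this
  · intro x y hx hy
    have := key2 x hx y
    rwa [if_neg (fun h => hy (by obtain ⟨i, hr⟩ := hx; exact ⟨i, hr.trans h⟩)),
      if_neg hy, sub_zero] at this
  · intro x y hx hy hr
    have := key2 x hx y
    rwa [if_pos hr] at this
  · intro x y hx hy hr
    have := key2 x hx y
    rw [if_neg hr, if_pos hy] at this
    have h1 : T.dist u' y = T.dist v y + 1 := by
      have h2 : T.dist y u' = T.dist y v + T.dist v u' := cross hy hMu'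
      rw [SimpleGraph.dist_comm (u := u') (v := y), h2, hone hu', SimpleGraph.dist_comm (u := y) (v := v)]
    rw [h1] at this
    push_cast at this ⊢
    omega
end M

/-- moving the branches `M` at `v` to `u` or to `w` strictly increases the
Wiener index for at least one of the two choices. -/
theorem stmt0 {V : Type*} [Fintype V] (T : SimpleGraph V) (hT : T.IsTree)
    (v u w : V) (t : ℕ) (ht : 1 ≤ t) (vs : Fin t → V) (hinj : Function.Injective vs)
    (hu : T.Adj v u) (hw : T.Adj v w) (huw : u ≠ w)
    (hvs : ∀ i, T.Adj v (vs i)) (hvsu : ∀ i, vs i ≠ u) (hvsw : ∀ i, vs i ≠ w)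
    (hnb : ∀ x, T.Adj v x → x = u ∨ x = w ∨ ∃ i, vs i = x) :
    wiener T < max
      (wiener ((T.deleteEdges {e | ∃ i, e = s(v, vs i)}) ⊔
        SimpleGraph.fromEdgeSet {e | ∃ i, e = s(u, vs i)}))
      (wiener ((T.deleteEdges {e | ∃ i, e = s(v, vs i)}) ⊔
        SimpleGraph.fromEdgeSet {e | ∃ i, e = s(w, vs i)})) := by
  classical
  set Gu := (T.deleteEdges {e | ∃ i, e = s(v, vs i)}) ⊔
      SimpleGraph.fromEdgeSet {e | ∃ i, e = s(u, vs i)} with hGu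
  set Gw := (T.deleteEdges {e | ∃ i, e = s(v, vs i)}) ⊔
      SimpleGraph.fromEdgeSet {e | ∃ i, e = s(w, vs i)} with hGw
  have hc := hT.isConnected
  obtain ⟨A0, A1, A2, A3⟩ := main_lb hT hvs hu hw hvsu hvsw hnb hu hvsu Gu hGu
  obtain ⟨B0, B1, B2, B3⟩ := main_lb hT hvs hu hw hvsu hvsw hnb hw hvsw Gw hGw
  have hvne : ∀ i, vs i ≠ v := fun i => (hvs i).ne'
  have hMvs : ∀ i, InM T v vs (vs i) := fun i => ⟨i, Reachable.refl _⟩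
  have hMv : ¬ InM T v vs v := by
    rintro ⟨i, hr⟩
    exact hvne i (dv_reach_v hr.symm).symm
  have cross : ∀ {x y : V}, InM T v vs x → ¬ InM T v vs y →
      T.dist x y = T.dist x v + T.dist v y := by
    rintro x y ⟨i, hrx⟩ hy
    exact dist_split_v hc (fun hxy => hy ⟨i, hrx.trans hxy⟩)
  have hone : ∀ {a : V}, T.Adj v a → T.dist v a = 1 :=
    fun h => SimpleGraph.dist_eq_one_iff_adj.mpr h
  have hA := two_dist_le hT vs hu hw huw hvs hvsu hvsw hnb
  set i0 : Fin t := ⟨0, ht⟩ with hi0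
  have sumpair : ∀ x y : V, 2 * (T.dist x y : ℚ) ≤ (Gu.dist x y : ℚ) + (Gw.dist x y : ℚ) := by
    intro x y
    have goalZ : 2 * (T.dist x y : ℤ) ≤ (Gu.dist x y : ℤ) + (Gw.dist x y : ℤ) := by
      by_cases hx : InM T v vs x <;> by_cases hy : InM T v vs y
      · by_cases hr : (T.deleteEdges {e | v ∈ e}).Reachable x y
        · have h1 := A2 x y hx hy hr
          have h2 := B2 x y hx hy hr
          omega
        · have h1 := A3 x y hx hy hr
          have h2 := B3 x y hx hy hr
          have h3 : T.dist x y ≤ T.dist x v + T.dist v y := hc.dist_triangle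
          omega
      · have h1 := A1 x y hx hy
        have h2 := B1 x y hx hy
        have h3 := hA y
        have h4 : T.dist x y = T.dist x v + T.dist v y := cross hx hy
        omega
      · have h1 := A1 y x hy hx
        have h2 := B1 y x hy hx
        have h3 := hA x
        have h4 : T.dist y x = T.dist y v + T.dist v x := cross hy hx
        have c1 : Gu.dist x y = Gu.dist y x := SimpleGraph.dist_comm (u := x) (v := y)
        have c2 : Gw.dist x y = Gw.dist y x := SimpleGraph.dist_comm (u := x) (v := y)
        have c3 : T.dist x y = T.dist y x := SimpleGraph.dist_comm (u := x) (v := y)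
        omega
      · have h1 := A0 x y hx hy
        have h2 := B0 x y hx hy
        omega
    exact_mod_cast goalZ
  have strictpair : 2 * (T.dist (vs i0) v : ℚ) < (Gu.dist (vs i0) v : ℚ) + Gw.dist (vs i0) v := by
    have h1 := A1 (vs i0) v (hMvs i0) hMv
    have h2 := B1 (vs i0) v (hMvs i0) hMv
    have h3 : T.dist (vs i0) v = 1 := by
      rw [SimpleGraph.dist_comm (u := vs i0) (v := v)]
      exact hone (hvs i0)
    have h4 : T.dist u v = 1 := by
      rw [SimpleGraph.dist_comm (u := u) (v := v)]
      exact hone hu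
    have h5 : T.dist w v = 1 := by
      rw [SimpleGraph.dist_comm (u := w) (v := v)]
      exact hone hw
    have goalZ : 2 * (T.dist (vs i0) v : ℤ) < (Gu.dist (vs i0) v : ℤ) + Gw.dist (vs i0) v := by
      omega
    exact_mod_cast goalZ
  have hsum : ∑ x : V, ∑ y : V, 2 * (T.dist x y : ℚ) <
      ∑ x : V, ∑ y : V, ((Gu.dist x y : ℚ) + (Gw.dist x y : ℚ)) := by
    apply Finset.sum_lt_sum
    · intro x _
      exact Finset.sum_le_sum (fun y _ => sumpair x y)
    · refine ⟨vs i0, Finset.mem_univ _, ?_⟩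
      exact Finset.sum_lt_sum (fun y _ => sumpair (vs i0) y)
        ⟨v, Finset.mem_univ _, strictpair⟩
  have hW : 2 * wiener T < wiener Gu + wiener Gw := by
    rw [wiener, wiener, wiener]
    have e1 : ∑ x : V, ∑ y : V, 2 * (T.dist x y : ℚ) =
        2 * ∑ x : V, ∑ y : V, (T.dist x y : ℚ) := by
      rw [Finset.mul_sum]
      exact Finset.sum_congr rfl (fun x _ => (Finset.mul_sum _ _ _).symm)
    have e2 : ∑ x : V, ∑ y : V, ((Gu.dist x y : ℚ) + (Gw.dist x y : ℚ)) =
        (∑ x : V, ∑ y : V, (Gu.dist x y : ℚ)) + ∑ x : V, ∑ y : V, (Gw.dist x y : ℚ) := by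
      rw [← Finset.sum_add_distrib]
      exact Finset.sum_congr rfl (fun x _ => Finset.sum_add_distrib)
    rw [e1, e2] at hsum
    linarith
  by_contra hcon
  push_neg at hcon
  have h1 : wiener Gu ≤ wiener T := le_trans (le_max_left _ _) hcon
  have h2 : wiener Gw ≤ wiener T := le_trans (le_max_right _ _) hcon
  linarith
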